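/- Let L > 0, μ ∈ [0, L), κ := μ/L, and let f : E → ℝ be a differentiable function on a real inner product space E with f ∈ F_{μ,L} and f_* := inf_x f(x) > −∞. Let (s_k)_{k≥−1} be a sequence of reals with s_{−1} = 0 and, for each k ≥ −1, s_{k+1} ∈ [1, 2/(1+κ)) satisfying s_{k+1}·[(2−s_{k+1})(2−κ·s_{k+1}) − 1]/(2 − s_{k+1}(1+κ)) + s_k/(2 − s_k(1+κ)) = 0. Fix an integer N ≥ 1 and run gradient descent x_{i+1} = x_i − (s_i/L)·∇f(x_i) for i = 0,…,N−1. Then (1/(2L))·‖∇f(x_N)‖² ≤ (f(x_0) − f_*) / ( 1 + s_{N−1}/(2 − s_{N−1}(1+κ)) ). -/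

import Mathlib

open InnerProductSpace

local notation "⟪" x ", " y "⟫" => @inner ℝ _ _ x y

/-- First-order condition for a convex differentiable function. -/
lemma convexOn_first_order {E : Type*} [NormedAddCommGroup E] [NormedSpace ℝ E]
    {φ : E → ℝ} (hφ : ConvexOn ℝ Set.univ φ) {a b : E} {D : E →L[ℝ] ℝ}
    (hD : HasFDerivAt φ D a) : φ a + D (b - a) ≤ φ b := by
  set ψ : ℝ → ℝ := fun t => φ (t • (b - a) + a) with hψdef
  have hψc : ConvexOn ℝ Set.univ ψ := by
    have := hφ.comp_affineMap (AffineMap.lineMap a b)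
    rw [Set.preimage_univ] at this
    have heq : ψ = φ ∘ AffineMap.lineMap a b := by
      funext t; simp [ψ, AffineMap.lineMap_apply]
    rw [heq]; exact this
  have hline : HasDerivAt (fun t : ℝ => t • (b - a) + a) (b - a) 0 := by
    simpa using ((hasDerivAt_id (0:ℝ)).smul_const (b - a)).add_const a
  have hψd : HasDerivAt ψ (D (b - a)) 0 := by
    have hD0 : HasFDerivAt φ D ((0:ℝ) • (b - a) + a) := by simpa using hD
    exact hD0.comp_hasDerivAt 0 hline
  have hslope := hψc.le_slope_of_hasDerivAt (Set.mem_univ 0) (Set.mem_univ 1) one_pos hψd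
  have h1 : ψ 1 = φ b := by simp [ψ]
  have h0 : ψ 0 = φ a := by simp [ψ]
  rw [slope_def_field] at hslope
  simp only [h1, h0, div_one, sub_zero] at hslope
  have hDsub : D (b - a) = D b - D a := map_sub D b a
  linarith

/-- Descent-type upper bound from `L`-smoothness. -/
lemma smooth_upper {E : Type*} [NormedAddCommGroup E] [InnerProductSpace ℝ E] [CompleteSpace E]
    (L : ℝ) (f : E → ℝ) (hdiff : Differentiable ℝ f)
    (hsmooth : ConvexOn ℝ Set.univ (fun z => L / 2 * ‖z‖ ^ 2 - f z)) (a b : E) :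
    f b ≤ f a + ⟪gradient f a, b - a⟫ + L / 2 * ‖b - a‖ ^ 2 := by
  have hf' : HasFDerivAt f ((toDual ℝ E) (gradient f a)) a :=
    (hdiff a).hasGradientAt.hasFDerivAt
  have hn : HasFDerivAt (fun z : E => L / 2 * ‖z‖ ^ 2)
      ((L / 2) • ((2:ℕ) • (innerSL ℝ a))) a :=
    ((hasStrictFDerivAt_norm_sq a).hasFDerivAt).const_mul (L / 2)
  have hD : HasFDerivAt (fun z => L / 2 * ‖z‖ ^ 2 - f z)
      ((L / 2) • ((2:ℕ) • (innerSL ℝ a)) - (toDual ℝ E) (gradient f a)) a := hn.sub hf'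
  have h := convexOn_first_order hsmooth (b := b) hD
  have happ : ((L / 2) • ((2:ℕ) • (innerSL ℝ a)) - (toDual ℝ E) (gradient f a)) (b - a)
      = L / 2 * (2 * ⟪a, b - a⟫) - ⟪gradient f a, b - a⟫ := by
    simp [ContinuousLinearMap.sub_apply, ContinuousLinearMap.smul_apply,
      InnerProductSpace.toDual_apply_apply]
  rw [happ] at h
  have hid : ‖b‖ ^ 2 = ‖a‖ ^ 2 + 2 * ⟪a, b - a⟫ + ‖b - a‖ ^ 2 := by
    have := norm_add_sq_real a (b - a)
    simpa using this
  rw [hid] at h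
  ring_nf at h ⊢
  linarith [h]

/-- Lower bound from `μ`-strong convexity. -/
lemma curv_lower {E : Type*} [NormedAddCommGroup E] [InnerProductSpace ℝ E] [CompleteSpace E]
    (μ : ℝ) (f : E → ℝ) (hdiff : Differentiable ℝ f)
    (hcurv : ConvexOn ℝ Set.univ (fun z => f z - μ / 2 * ‖z‖ ^ 2)) (a b : E) :
    f a + ⟪gradient f a, b - a⟫ + μ / 2 * ‖b - a‖ ^ 2 ≤ f b := by
  have hf' : HasFDerivAt f ((toDual ℝ E) (gradient f a)) a :=
    (hdiff a).hasGradientAt.hasFDerivAt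
  have hn : HasFDerivAt (fun z : E => μ / 2 * ‖z‖ ^ 2)
      ((μ / 2) • ((2:ℕ) • (innerSL ℝ a))) a :=
    ((hasStrictFDerivAt_norm_sq a).hasFDerivAt).const_mul (μ / 2)
  have hD : HasFDerivAt (fun z => f z - μ / 2 * ‖z‖ ^ 2)
      ((toDual ℝ E) (gradient f a) - (μ / 2) • ((2:ℕ) • (innerSL ℝ a))) a := hf'.sub hn
  have h := convexOn_first_order hcurv (b := b) hD
  have happ : ((toDual ℝ E) (gradient f a) - (μ / 2) • ((2:ℕ) • (innerSL ℝ a))) (b - a)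
      = ⟪gradient f a, b - a⟫ - μ / 2 * (2 * ⟪a, b - a⟫) := by
    simp [ContinuousLinearMap.sub_apply, ContinuousLinearMap.smul_apply,
      InnerProductSpace.toDual_apply_apply]
  rw [happ] at h
  have hid : ‖b‖ ^ 2 = ‖a‖ ^ 2 + 2 * ⟪a, b - a⟫ + ‖b - a‖ ^ 2 := by
    have := norm_add_sq_real a (b - a)
    simpa using this
  rw [hid] at h
  ring_nf at h ⊢
  linarith [h]

/-- Interpolation inequality for the class `F_{μ,L}`. -/
lemma interp_ineq {E : Type*} [NormedAddCommGroup E] [InnerProductSpace ℝ E] [CompleteSpace E]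
    (L μ : ℝ) (hμL : μ < L) (f : E → ℝ) (hdiff : Differentiable ℝ f)
    (hsmooth : ConvexOn ℝ Set.univ (fun z => L / 2 * ‖z‖ ^ 2 - f z))
    (hcurv : ConvexOn ℝ Set.univ (fun z => f z - μ / 2 * ‖z‖ ^ 2)) (u v : E) :
    f v + ⟪gradient f v, u - v⟫ + μ / 2 * ‖u - v‖ ^ 2 +
      ‖(gradient f u - gradient f v) - μ • (u - v)‖ ^ 2 / (2 * (L - μ)) ≤ f u := by
  have hLμ : (0:ℝ) < L - μ := by linarith
  set gu := gradient f u with hgu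
  set gv := gradient f v with hgv
  set e := (gu - gv) - μ • (u - v) with he
  set c : ℝ := (L - μ)⁻¹ with hc
  set w := u - c • e with hw
  have h1 := curv_lower μ f hdiff hcurv v w
  have h2 := smooth_upper L f hdiff hsmooth u w
  have hwv : w - v = (u - v) - c • e := by rw [hw]; abel
  have hwu : w - u = -(c • e) := by rw [hw]; abel
  rw [hwv] at h1
  rw [hwu] at h2
  have A1 : ⟪gv, (u - v) - c • e⟫ = ⟪gv, u - v⟫ - c * ⟪gv, e⟫ := by
    rw [inner_sub_right, real_inner_smul_right]
  have A2 : ‖(u - v) - c • e‖ ^ 2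
      = ‖u - v‖ ^ 2 - 2 * (c * ⟪u - v, e⟫) + c ^ 2 * ‖e‖ ^ 2 := by
    rw [norm_sub_sq_real, real_inner_smul_right, norm_smul]
    simp [mul_pow, sq_abs]
  have A3 : ⟪gu, -(c • e)⟫ = -(c * ⟪gu, e⟫) := by
    rw [inner_neg_right, real_inner_smul_right]
  have A4 : ‖-(c • e)‖ ^ 2 = c ^ 2 * ‖e‖ ^ 2 := by
    rw [norm_neg, norm_smul]; simp [mul_pow, sq_abs]
  have A5 : ⟪gu, e⟫ - ⟪gv, e⟫ - μ * ⟪u - v, e⟫ = ‖e‖ ^ 2 := by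
    have h5 : ⟪gu - gv - μ • (u - v), e⟫ = ⟪gu, e⟫ - ⟪gv, e⟫ - μ * ⟪u - v, e⟫ := by
      rw [inner_sub_left, inner_sub_left, real_inner_smul_left]
    rw [← h5, ← he, real_inner_self_eq_norm_sq]
  rw [A1, A2] at h1
  rw [A3, A4] at h2
  -- key scalar identity, using A5 to eliminate ⟪gu, e⟫
  have key : (f v + (⟪gv, u - v⟫ - c * ⟪gv, e⟫) +
        μ / 2 * (‖u - v‖ ^ 2 - 2 * (c * ⟪u - v, e⟫) + c ^ 2 * ‖e‖ ^ 2))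
        - (-(c * ⟪gu, e⟫) + L / 2 * (c ^ 2 * ‖e‖ ^ 2))
      = f v + ⟪gv, u - v⟫ + μ / 2 * ‖u - v‖ ^ 2 + ‖e‖ ^ 2 / (2 * (L - μ)) := by
    have hgue : ⟪gu, e⟫ = ‖e‖ ^ 2 + ⟪gv, e⟫ + μ * ⟪u - v, e⟫ := by linarith [A5]
    rw [hgue, hc]
    field_simp
    ring
  linarith

/-- Core per-step scalar inequality for the dynamic stepsize schedule. -/
lemma core_step (L μ κ sp T t A B C Q f0 f1 : ℝ) (hL : 0 < L) (hμ : 0 ≤ μ) (hμL : μ < L)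
    (hκ : κ = μ / L) (ht : t = 1 - μ * (sp / L)) (hQ : Q = B - 2 * t * C + t ^ 2 * A)
    (hs1 : 1 ≤ sp) (hs2 : sp < 2 / (1 + κ))
    (hT : sp * ((2 - sp) * (2 - κ * sp) - 1) / (2 - sp * (1 + κ)) + T = 0)
    (h1 : f0 - sp / L * A + μ / 2 * ((sp / L) ^ 2 * A) + Q / (2 * (L - μ)) ≤ f1)
    (h2 : f1 + sp / L * C + μ / 2 * ((sp / L) ^ 2 * A) + Q / (2 * (L - μ)) ≤ f0) :
    f1 + sp / (2 - sp * (1 + κ)) * (B / (2 * L)) ≤ f0 + T * (A / (2 * L)) := by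
  have hLne : L ≠ 0 := ne_of_gt hL
  have hκ0 : 0 ≤ κ := hκ ▸ div_nonneg hμ hL.le
  have hκ1 : κ < 1 := hκ ▸ (div_lt_one hL).mpr hμL
  have h1κ : (0:ℝ) < 1 + κ := by linarith
  have hd : 0 < 2 - sp * (1 + κ) := by
    have := (lt_div_iff₀ h1κ).mp hs2
    linarith
  have hdne : 2 - sp * (1 + κ) ≠ 0 := ne_of_gt hd
  have hLμ : (0:ℝ) < L - μ := by linarith
  have hμκ : μ = κ * L := by rw [hκ]; field_simp
  set lam : ℝ := (sp - 1) / (2 - sp * (1 + κ)) with hlam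
  have hlam0 : 0 ≤ lam := div_nonneg (by linarith) hd.le
  have hT' : T = sp * (1 - (2 - sp) * (2 - κ * sp)) / (2 - sp * (1 + κ)) := by
    have : sp * (1 - (2 - sp) * (2 - κ * sp)) / (2 - sp * (1 + κ))
        = - (sp * ((2 - sp) * (2 - κ * sp) - 1) / (2 - sp * (1 + κ))) := by
      rw [← neg_div]; ring_nf
    rw [this]; linarith
  have e1 : 0 ≤ f1 - (f0 - sp / L * A + μ / 2 * ((sp / L) ^ 2 * A) + Q / (2 * (L - μ))) := by
    linarith
  have e2 : 0 ≤ f0 - (f1 + sp / L * C + μ / 2 * ((sp / L) ^ 2 * A) + Q / (2 * (L - μ))) := by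
    linarith
  have key : f0 + T * (A / (2 * L)) - (f1 + sp / (2 - sp * (1 + κ)) * (B / (2 * L)))
      = lam * (f1 - (f0 - sp / L * A + μ / 2 * ((sp / L) ^ 2 * A) + Q / (2 * (L - μ))))
        + (lam + 1) *
          (f0 - (f1 + sp / L * C + μ / 2 * ((sp / L) ^ 2 * A) + Q / (2 * (L - μ)))) := by
    rw [hT', hQ, ht, hlam, hμκ]
    have hLμne : L - κ * L ≠ 0 := by rw [← hμκ]; exact ne_of_gt hLμ
    have h1κne : 1 - κ ≠ 0 := ne_of_gt (by linarith)
    field_simp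
    ring
  nlinarith [mul_nonneg hlam0 e1, mul_nonneg (by linarith : (0:ℝ) ≤ lam + 1) e2]

/-- **Rate of gradient descent with the dynamic stepsize schedule on smooth (strongly)
convex functions (Theorem 7 / `thm:convergence_rates_strg_convex_variable_stepsizes`).**
Let `0 ≤ μ < L`, `κ = μ/L`, `f ∈ F_{μ,L}` bounded below. Let `(s_k)_{k ≥ -1}` (encoded
with shifted index, `s 0 = s_{-1} = 0`) be the dynamic stepsize sequence: each
`s_{k+1} ∈ [1, 2/(1+κ))` solves
`s[(2−s)(2−κs)−1]/(2−s(1+κ)) + s_k/(2−s_k(1+κ)) = 0`.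
Run `N ≥ 1` steps of gradient descent with stepsizes `γ_i = s_i/L`. Then
`(1/(2L))‖∇f(x_N)‖² ≤ (f(x₀) − f_*)/(1 + s_{N−1}/(2 − s_{N−1}(1+κ)))`. -/
theorem gd_dynamic_stepsizes_strongly_convex_rate
    {E : Type*} [NormedAddCommGroup E] [InnerProductSpace ℝ E] [CompleteSpace E]
    (L μ : ℝ) (hL : 0 < L) (hμ : 0 ≤ μ) (hμL : μ < L)
    (κ : ℝ) (hκ : κ = μ / L)
    (f : E → ℝ) (hdiff : Differentiable ℝ f)
    (hsmooth : ConvexOn ℝ Set.univ (fun z => L / 2 * ‖z‖ ^ 2 - f z))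
    (hcurv : ConvexOn ℝ Set.univ (fun z => f z - μ / 2 * ‖z‖ ^ 2))
    (hbdd : BddBelow (Set.range f))
    (s : ℕ → ℝ) (hs0 : s 0 = 0)
    (hrec : ∀ k : ℕ,
      s (k + 1) ∈ Set.Ico (1 : ℝ) (2 / (1 + κ)) ∧
      s (k + 1) * ((2 - s (k + 1)) * (2 - κ * s (k + 1)) - 1) /
          (2 - s (k + 1) * (1 + κ)) +
        s k / (2 - s k * (1 + κ)) = 0)
    (N : ℕ) (hN : 1 ≤ N)
    (x : ℕ → E) (hx : ∀ i < N, x (i + 1) = x i - (s (i + 1) / L) • gradient f (x i)) :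
    1 / (2 * L) * ‖gradient f (x N)‖ ^ 2 ≤
      (f (x 0) - ⨅ y, f y) / (1 + s N / (2 - s N * (1 + κ))) := by
  have hLne : L ≠ 0 := ne_of_gt hL
  have hκ1 : κ < 1 := hκ ▸ (div_lt_one hL).mpr hμL
  have hκ0 : 0 ≤ κ := hκ ▸ div_nonneg hμ hL.le
  have h1κ : (0:ℝ) < 1 + κ := by linarith
  -- per-step decrease of the potential
  have step : ∀ k, k < N →
      f (x (k + 1)) + s (k + 1) / (2 - s (k + 1) * (1 + κ)) *
          (‖gradient f (x (k + 1))‖ ^ 2 / (2 * L))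
        ≤ f (x k) + s k / (2 - s k * (1 + κ)) * (‖gradient f (x k)‖ ^ 2 / (2 * L)) := by
    intro k hk
    obtain ⟨⟨hs1, hs2⟩, hTk⟩ := hrec k
    set sp := s (k + 1) with hsp
    set g := gradient f (x k) with hg
    set g' := gradient f (x (k + 1)) with hg'
    set t : ℝ := 1 - μ * (sp / L) with htdef
    have hd1 : x (k + 1) - x k = -((sp / L) • g) := by
      rw [hx k hk, sub_sub_cancel_left]
    have hd2 : x k - x (k + 1) = (sp / L) • g := by
      rw [hx k hk, sub_sub_cancel]
    have h1 := interp_ineq L μ hμL f hdiff hsmooth hcurv (x (k + 1)) (x k)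
    have h2 := interp_ineq L μ hμL f hdiff hsmooth hcurv (x k) (x (k + 1))
    rw [hd1] at h1
    rw [hd2] at h2
    have c1 : ⟪g, -((sp / L) • g)⟫ = -(sp / L * ‖g‖ ^ 2) := by
      rw [inner_neg_right, real_inner_smul_right, real_inner_self_eq_norm_sq]
    have c2 : ‖-((sp / L) • g)‖ ^ 2 = (sp / L) ^ 2 * ‖g‖ ^ 2 := by
      rw [norm_neg, norm_smul, Real.norm_eq_abs, mul_pow, sq_abs]
    have c3 : (g' - g) - μ • (-((sp / L) • g)) = g' - t • g := by
      rw [htdef, sub_smul, one_smul, smul_neg, smul_smul]; abel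
    have c4 : ⟪g', (sp / L) • g⟫ = sp / L * ⟪g', g⟫ := real_inner_smul_right g' g (sp / L)
    have c5 : ‖(sp / L) • g‖ ^ 2 = (sp / L) ^ 2 * ‖g‖ ^ 2 := by
      rw [norm_smul, Real.norm_eq_abs, mul_pow, sq_abs]
    have c6 : (g - g') - μ • ((sp / L) • g) = -(g' - t • g) := by
      rw [htdef, sub_smul, one_smul, smul_smul]; abel
    have hQ : ‖g' - t • g‖ ^ 2 = ‖g'‖ ^ 2 - 2 * t * ⟪g', g⟫ + t ^ 2 * ‖g‖ ^ 2 := by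
      rw [norm_sub_sq_real, real_inner_smul_right, norm_smul, Real.norm_eq_abs, mul_pow, sq_abs]
      ring
    rw [c1, c2, c3] at h1
    rw [c4, c5, c6, norm_neg] at h2
    exact core_step L μ κ sp (s k / (2 - s k * (1 + κ))) t (‖g‖ ^ 2) (‖g'‖ ^ 2) ⟪g', g⟫
      (‖g' - t • g‖ ^ 2) (f (x k)) (f (x (k + 1))) hL hμ hμL hκ htdef hQ hs1 hs2 hTk
      (by linarith [h1]) (by linarith [h2])
  -- potential bound by induction
  have claim : ∀ k, k ≤ N →
      f (x k) + s k / (2 - s k * (1 + κ)) * (‖gradient f (x k)‖ ^ 2 / (2 * L)) ≤ f (x 0) := by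
    intro k
    induction k with
    | zero => intro _; simp [hs0]
    | succ k ih =>
      intro hk
      have hkN : k < N := Nat.lt_of_succ_le hk
      exact (step k hkN).trans (ih hkN.le)
  -- final assembly
  obtain ⟨M, rfl⟩ : ∃ M, N = M + 1 := ⟨N - 1, (Nat.succ_pred_eq_of_pos hN).symm⟩
  set gN := gradient f (x (M + 1)) with hgN
  obtain ⟨hs1N, hs2N⟩ := (hrec M).1
  have hdN : 0 < 2 - s (M + 1) * (1 + κ) := by
    have := (lt_div_iff₀ h1κ).mp hs2N
    linarith
  have hτ : 0 < s (M + 1) / (2 - s (M + 1) * (1 + κ)) :=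
    div_pos (by linarith) hdN
  have hfin := claim (M + 1) le_rfl
  have hup := smooth_upper L f hdiff hsmooth (x (M + 1)) (x (M + 1) - L⁻¹ • gN)
  have hba : x (M + 1) - L⁻¹ • gN - x (M + 1) = -(L⁻¹ • gN) := by
    rw [sub_sub_cancel_left]
  rw [hba] at hup
  have c1' : ⟪gN, -(L⁻¹ • gN)⟫ = -(L⁻¹ * ‖gN‖ ^ 2) := by
    rw [inner_neg_right, real_inner_smul_right, real_inner_self_eq_norm_sq]
  have c2' : ‖-(L⁻¹ • gN)‖ ^ 2 = (L⁻¹) ^ 2 * ‖gN‖ ^ 2 := by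
    rw [norm_neg, norm_smul, Real.norm_eq_abs, mul_pow, sq_abs]
  rw [c1', c2'] at hup
  have harr : -(L⁻¹ * ‖gN‖ ^ 2) + L / 2 * ((L⁻¹) ^ 2 * ‖gN‖ ^ 2) = -(‖gN‖ ^ 2 / (2 * L)) := by
    field_simp; ring
  have hdesc : f (x (M + 1) - L⁻¹ • gN) ≤ f (x (M + 1)) - ‖gN‖ ^ 2 / (2 * L) := by
    linarith
  have hinf_le : (⨅ y, f y) ≤ f (x (M + 1) - L⁻¹ • gN) := ciInf_le hbdd _
  rw [le_div_iff₀ (by linarith : (0:ℝ) < 1 + s (M + 1) / (2 - s (M + 1) * (1 + κ)))]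
  have hround : 1 / (2 * L) * ‖gN‖ ^ 2 * (1 + s (M + 1) / (2 - s (M + 1) * (1 + κ)))
      = ‖gN‖ ^ 2 / (2 * L)
        + s (M + 1) / (2 - s (M + 1) * (1 + κ)) * (‖gN‖ ^ 2 / (2 * L)) := by
    ring
  linarith
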